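/- (1) For every partition 𝒦 of G into G-invariant subsets, Clpt(Irpt(𝒦)) ≼ 𝒦. (2) For every partition 𝒳 of Irr(G), Irpt(Clpt(𝒳)) ≼ 𝒳. -/

import Mathlib

open scoped BigOperators

noncomputable section

/-- `χ` is an irreducible complex character of `G`. -/
def IsIrrChar (G : Type) [Group G] [Fintype G] (χ : G → ℂ) : Prop :=
  ∃ V : FDRep ℂ G, CategoryTheory.Simple V ∧ χ = FDRep.character V

/-- The type of irreducible complex characters of `G` (denoted `Irr G`). -/
abbrev IrrChar (G : Type) [Group G] [Fintype G] := {χ : G → ℂ // IsIrrChar G χ}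

variable (G : Type) [Group G] [Fintype G]

/-- `σ_X = ∑_{χ ∈ X} χ(1)·χ`. -/
def sigmaChar (X : Set (IrrChar G)) : G → ℂ :=
  fun g => ∑ᶠ χ ∈ X, χ.1 1 * χ.1 g

/-- A subset of `G` is `G`-invariant if it is closed under conjugation. -/
def GInv (K : Set G) : Prop := ∀ g x : G, x ∈ K → g * x * g⁻¹ ∈ K

/-- `Clpt 𝒳`: the partition of `G` into equivalence classes of
`g ~ h ↔ σ_X(g) = σ_X(h)` for all `X ∈ 𝒳`. -/
def Clpt (𝒳 : Set (Set (IrrChar G))) : Set (Set G) :=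
  {C | ∃ g : G, C = {h : G | ∀ X ∈ 𝒳, sigmaChar G X h = sigmaChar G X g}}

/-- `χ(K̂) = ∑_{g ∈ K} χ(g)`. -/
def charSum (χ : G → ℂ) (K : Set G) : ℂ := ∑ᶠ g ∈ K, χ g

/-- `Irpt 𝒦`: the partition of `Irr G` into equivalence classes of
`χ ~ ψ ↔ χ(K̂)/χ(1) = ψ(K̂)/ψ(1)` for all `K ∈ 𝒦`. -/
def Irpt (𝒦 : Set (Set G)) : Set (Set (IrrChar G)) :=
  {Y | ∃ χ : IrrChar G, Y = {ψ : IrrChar G |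
      ∀ K ∈ 𝒦, charSum G ψ.1 K / ψ.1 1 = charSum G χ.1 K / χ.1 1}}

/-- `P` refines `Q` (`P ≼ Q`): every block of `P` is contained in a block of `Q`. -/
def Refines {α : Type} (P Q : Set (Set α)) : Prop :=
  ∀ A ∈ P, ∃ B ∈ Q, A ⊆ B

/-- `(𝒳, 𝒦)` is a supercharacter theory of `G`. -/
def IsSCT (𝒳 : Set (Set (IrrChar G))) (𝒦 : Set (Set G)) : Prop :=
  Setoid.IsPartition 𝒳 ∧ Setoid.IsPartition 𝒦 ∧ (∀ K ∈ 𝒦, GInv G K) ∧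
    𝒳.ncard = 𝒦.ncard ∧
    ∀ X ∈ 𝒳, ∀ K ∈ 𝒦, ∀ g ∈ K, ∀ h ∈ K, sigmaChar G X g = sigmaChar G X h

/-- `K̂ = ∑_{g ∈ K} g` in the group algebra. -/
def khat (K : Set G) : MonoidAlgebra ℂ G := ∑ᶠ g ∈ K, MonoidAlgebra.single g (1 : ℂ)

/-- The central idempotent `e_χ = (χ(1)/|G|) ∑_g χ(g) g⁻¹`. -/
def centIdem (χ : G → ℂ) : MonoidAlgebra ℂ G :=
  (χ 1 / (Fintype.card G : ℂ)) • ∑ g : G, MonoidAlgebra.single g⁻¹ (χ g)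

/-- `e_X = ∑_{χ ∈ X} e_χ`. -/
def eIdem (X : Set (IrrChar G)) : MonoidAlgebra ℂ G := ∑ᶠ χ ∈ X, centIdem G χ.1

/-- The linear extension of `χ : G → ℂ` to the group algebra. -/
def charExt (χ : G → ℂ) (z : MonoidAlgebra ℂ G) : ℂ := ∑ g : G, z.coeff g * χ g

/-- The subalgebra of functions `S → F` constant on each block of `𝒦`. -/
def MapPart (F : Type) [Field F] {S : Type} (𝒦 : Set (Set S)) : Subalgebra F (S → F) where
  carrier := {f | ∀ K ∈ 𝒦, ∀ s ∈ K, ∀ t ∈ K, f s = f t}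
  mul_mem' := fun {f g} hf hg K hK s hs t ht => by
    simp only [Pi.mul_apply, hf K hK s hs t ht, hg K hK s hs t ht]
  one_mem' := fun K hK s hs t ht => rfl
  add_mem' := fun {f g} hf hg K hK s hs t ht => by
    simp only [Pi.add_apply, hf K hK s hs t ht, hg K hK s hs t ht]
  zero_mem' := fun K hK s hs t ht => rfl
  algebraMap_mem' := fun r K hK s hs t ht => rfl

/-- The partition of `S` determined by a subalgebra `A` of `S → F`:
`s ~ t ↔ f(s) = f(t)` for all `f ∈ A`. -/
def algPart (F : Type) [Field F] {S : Type} (A : Subalgebra F (S → F)) : Set (Set S) :=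
  {C | ∃ s : S, C = {t : S | ∀ f ∈ A, f t = f s}}



/-! ### Auxiliary development -/

open CategoryTheory Module
open scoped Classical

set_option linter.unusedSectionVars false
set_option maxHeartbeats 1000000

section AuxChar

lemma simple_finrank_ne_zero (V : FDRep ℂ G) [Simple V] : finrank ℂ V ≠ 0 := by
  intro h
  rw [finrank_zero_iff] at h
  apply id_nonzero V
  ext x
  exact h.elim _ _

lemma char_one_ne_zero (χ : IrrChar G) : χ.1 1 ≠ 0 := by
  obtain ⟨V, hV, hc⟩ := χ.2
  haveI := hV
  rw [hc, FDRep.char_one]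
  exact_mod_cast simple_finrank_ne_zero G V

lemma ortho_char (V W : FDRep ℂ G) [Simple V] [Simple W] :
    ∑ g : G, V.character g * W.character g⁻¹ =
      if Nonempty (V ≅ W) then (Fintype.card G : ℂ) else 0 := by
  have hcg : Nat.card G = Fintype.card G := Nat.card_eq_fintype_card
  have hcard : ((Nat.card G : ℕ) : ℂ) ≠ 0 := by
    rw [hcg]; exact_mod_cast (Fintype.card_ne_zero (α := G))
  letI : Invertible ((Nat.card G : ℂ)) := invertibleOfNonzero hcard
  have h := FDRep.char_orthonormal (k := ℂ) (G := G) V W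
  have h2 := congrArg (fun z => (Nat.card G : ℂ) * z) h
  simp only [smul_eq_mul, ← mul_assoc, mul_inv_cancel₀ hcard, one_mul] at h2
  exact h2.trans (by rw [hcg]; split_ifs <;> simp)

lemma ortho (χ ψ : IrrChar G) :
    ∑ g : G, χ.1 g * ψ.1 g⁻¹ = if χ = ψ then (Fintype.card G : ℂ) else 0 := by
  obtain ⟨V, hV, hVc⟩ := χ.2
  obtain ⟨W, hW, hWc⟩ := ψ.2
  haveI := hV; haveI := hW
  by_cases hiso : Nonempty (V ≅ W)
  · have heq : χ = ψ := Subtype.ext (by rw [hVc, hWc, FDRep.char_iso hiso.some])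
    rw [if_pos heq, hVc, hWc, ortho_char G V W, if_pos hiso]
  · have hne : χ ≠ ψ := by
      intro heq
      have hchar : V.character = W.character := by rw [← hVc, ← hWc, heq]
      have h1 := ortho_char G V V
      rw [if_pos ⟨Iso.refl V⟩] at h1
      have h2 := ortho_char G V W
      rw [if_neg hiso, hchar] at h2
      rw [hchar, h2] at h1
      exact (Fintype.card_ne_zero (α := G)) (by exact_mod_cast h1.symm)
    rw [if_neg hne, hVc, hWc, ortho_char G V W, if_neg hiso]

omit [Group G] [Fintype G] in
lemma trace_pow_pred_conj {M : Type} [AddCommGroup M] [Module ℂ M] [FiniteDimensional ℂ M]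
    (A : M →ₗ[ℂ] M) (n : ℕ) (hn : 1 < n) (hA : A ^ n = 1) :
    LinearMap.trace ℂ M (A ^ (n - 1)) = starRingEnd ℂ (LinearMap.trace ℂ M A) := by
  have hn0 : n ≠ 0 := by omega
  have hnC : (n : ℂ) ≠ 0 := Nat.cast_ne_zero.mpr hn0
  set ζ : ℂ := Complex.exp (2 * Real.pi * Complex.I / n) with hζdef
  have hζ : IsPrimitiveRoot ζ n := Complex.isPrimitiveRoot_exp n hn0
  have hζn : ζ ^ n = 1 := hζ.pow_eq_one
  have hζ0 : ζ ≠ 0 := fun h => by rw [h, zero_pow hn0] at hζn; exact one_ne_zero hζn.symm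
  have hgeom : ∀ w : ℂ, w ^ n = 1 → ∑ i ∈ Finset.range n, w ^ i = if w = 1 then (n : ℂ) else 0 := by
    intro w hw
    split_ifs with h
    · simp [h]
    · rw [geom_sum_eq h, hw, sub_self, zero_div]
  set P : ℂ → (M →ₗ[ℂ] M) := fun u => (n : ℂ)⁻¹ • ∑ j ∈ Finset.range n, u⁻¹ ^ j • A ^ j with hP
  have hPu : ∀ u, P u = (n : ℂ)⁻¹ • ∑ j ∈ Finset.range n, u⁻¹ ^ j • A ^ j := fun u => rfl
  have hAk : ∀ k, k < n → A ^ k = ∑ i ∈ Finset.range n, (ζ ^ i) ^ k • P (ζ ^ i) := by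
    intro k hk
    have hterm : ∀ i, (ζ ^ i) ^ k • P (ζ ^ i)
        = (n : ℂ)⁻¹ • ∑ j ∈ Finset.range n, (ζ ^ k * (ζ ^ j)⁻¹) ^ i • A ^ j := by
      intro i
      rw [hPu, smul_smul, Finset.smul_sum, Finset.smul_sum]
      apply Finset.sum_congr rfl
      intro j _
      rw [smul_smul, smul_smul]
      congr 1
      field_simp
      ring
    rw [Finset.sum_congr rfl (fun i _ => hterm i), ← Finset.smul_sum, Finset.sum_comm]
    have inner : ∀ j ∈ Finset.range n,
        (∑ i ∈ Finset.range n, (ζ ^ k * (ζ ^ j)⁻¹) ^ i • A ^ j)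
          = (if j = k then (n : ℂ) else 0) • A ^ j := by
      intro j hj
      rw [← Finset.sum_smul]
      congr 1
      have hpk : (ζ ^ k) ^ n = 1 := by rw [← pow_mul, mul_comm k n, pow_mul, hζn, one_pow]
      have hpj : (ζ ^ j) ^ n = 1 := by rw [← pow_mul, mul_comm j n, pow_mul, hζn, one_pow]
      have hwn : (ζ ^ k * (ζ ^ j)⁻¹) ^ n = 1 := by
        rw [mul_pow, inv_pow, hpk, hpj, inv_one, mul_one]
      rw [hgeom _ hwn]
      have hj0 : (ζ : ℂ) ^ j ≠ 0 := pow_ne_zero _ hζ0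
      congr 1
      simp only [eq_iff_iff]
      rw [mul_inv_eq_one₀ hj0]
      constructor
      · intro h
        exact (hζ.pow_inj hk (Finset.mem_range.mp hj) h).symm
      · rintro rfl; rfl
    rw [Finset.sum_congr rfl inner]
    have hswap : ∀ j ∈ Finset.range n, (if j = k then (n:ℂ) else 0) • A ^ j
        = if j = k then (n:ℂ) • A ^ k else 0 := by
      intro j _
      split_ifs with h
      · rw [h]
      · rw [zero_smul]
    rw [Finset.sum_congr rfl hswap, Finset.sum_ite_eq' (Finset.range n) k (fun _ => (n:ℂ) • A ^ k),
      if_pos (Finset.mem_range.mpr hk), smul_smul, inv_mul_cancel₀ hnC, one_smul]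
  have hidem : ∀ u : ℂ, u ^ n = 1 → P u * P u = P u := by
    intro u hu
    have key : ∀ j, (u⁻¹ • A) * (u⁻¹ ^ j • A ^ j) = u⁻¹ ^ (j+1) • A ^ (j+1) := by
      intro j
      rw [smul_mul_assoc, Algebra.mul_smul_comm, smul_smul, ← pow_succ' u⁻¹ j, ← pow_succ' A j]
    have hshift : (u⁻¹ • A) * P u = P u := by
      rw [hPu, Algebra.mul_smul_comm, Finset.mul_sum]
      congr 1
      rw [Finset.sum_congr rfl (fun j _ => key j)]
      have h0n : u⁻¹ ^ n • A ^ n = u⁻¹ ^ 0 • A ^ 0 := by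
        simp [hA, inv_pow, hu]
      calc ∑ j ∈ Finset.range n, u⁻¹ ^ (j+1) • A ^ (j+1)
          = ∑ j ∈ Finset.range (n+1), u⁻¹ ^ j • A ^ j - u⁻¹ ^ 0 • A ^ 0 :=
            eq_sub_of_add_eq (Finset.sum_range_succ' (fun j => u⁻¹ ^ j • A ^ j) n).symm
        _ = ∑ j ∈ Finset.range n, u⁻¹ ^ j • A ^ j := by
            rw [Finset.sum_range_succ (fun j => u⁻¹ ^ j • A ^ j) n, h0n, add_sub_cancel_right]
    have hpow : ∀ m : ℕ, (u⁻¹ • A) ^ m * P u = P u := by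
      intro m
      induction m with
      | zero => simp
      | succ m ih => rw [pow_succ, mul_assoc, hshift, ih]
    conv_lhs => rw [hPu, smul_mul_assoc, Finset.sum_mul]
    have hterm : ∀ j ∈ Finset.range n, (u⁻¹ ^ j • A ^ j) * P u = P u := by
      intro j _
      have := hpow j
      rwa [smul_pow] at this
    rw [Finset.sum_congr rfl hterm, Finset.sum_const, Finset.card_range,
      ← Nat.cast_smul_eq_nsmul ℂ, smul_smul, inv_mul_cancel₀ hnC, one_smul]
  have htr : ∀ u : ℂ, u ^ n = 1 →
      starRingEnd ℂ (LinearMap.trace ℂ M (P u)) = LinearMap.trace ℂ M (P u) := by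
    intro u hu
    have hid := hidem u hu
    have hproj : LinearMap.IsProj (LinearMap.range (P u)) (P u) := by
      refine ⟨fun x => ⟨x, rfl⟩, ?_⟩
      rintro x ⟨y, rfl⟩
      rw [← Module.End.mul_apply, hid]
    rw [hproj.trace]
    simp
  have e1 := hAk 1 hn
  have e2 := hAk (n-1) (by omega)
  rw [e2, map_sum]
  conv_rhs => rw [← pow_one A, e1, map_sum, map_sum]
  apply Finset.sum_congr rfl
  intro i _
  have hzi : (ζ ^ i) ^ n = 1 := by rw [← pow_mul, mul_comm i n, pow_mul, hζn, one_pow]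
  have hnorm : ‖(ζ:ℂ) ^ i‖ = 1 := Complex.norm_eq_one_of_pow_eq_one hzi hn0
  have hconj : ((ζ:ℂ) ^ i) ^ (n-1) = starRingEnd ℂ (ζ ^ i) := by
    have hmul : ((ζ:ℂ)^i)^(n-1) * (ζ^i) = 1 := by
      rw [← pow_succ, Nat.sub_add_cancel (by omega : 1 ≤ n)]
      exact hzi
    rw [eq_inv_of_mul_eq_one_left hmul]
    exact (Complex.inv_eq_conj hnorm)
  conv_lhs => rw [map_smul]
  conv_rhs => rw [map_smul]
  rw [smul_eq_mul, smul_eq_mul, pow_one, map_mul, htr _ hzi, hconj]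

lemma char_inv (V : FDRep ℂ G) (g : G) :
    V.character g⁻¹ = starRingEnd ℂ (V.character g) := by
  set n := 2 * Fintype.card G with hn_def
  have hn : 1 < n := by
    have := Fintype.card_pos (α := G); omega
  have hg : g ^ n = 1 := by
    rw [hn_def, mul_comm, pow_mul, pow_card_eq_one, one_pow]
  have hA : (V.ρ g) ^ n = 1 := by rw [← map_pow, hg, map_one]
  have hginv : g⁻¹ = g ^ (n - 1) := by
    have h : g ^ (n-1) * g = 1 := by
      rw [← pow_succ, Nat.sub_add_cancel (by omega : 1 ≤ n), hg]
    rw [eq_comm, ← eq_inv_of_mul_eq_one_left h]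
  show LinearMap.trace ℂ _ (V.ρ g⁻¹) = starRingEnd ℂ (LinearMap.trace ℂ _ (V.ρ g))
  rw [hginv, map_pow]
  exact trace_pow_pred_conj (V.ρ g) n hn hA

lemma char_inv_irr (χ : IrrChar G) (g : G) : χ.1 g⁻¹ = starRingEnd ℂ (χ.1 g) := by
  obtain ⟨V, hV, hc⟩ := χ.2
  rw [hc]
  exact char_inv G V g

lemma char_one_real (χ : IrrChar G) : starRingEnd ℂ (χ.1 1) = χ.1 1 := by
  have h := char_inv_irr G χ 1
  rw [inv_one] at h
  exact h.symm

lemma schur_char (V : FDRep ℂ G) [Simple V] (K : Finset G)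
    (hK : ∀ g x, x ∈ K → g * x * g⁻¹ ∈ K) (g : G) :
    (∑ k ∈ K, V.character (k * g)) * V.character 1 =
      (∑ k ∈ K, V.character k) * V.character g := by
  classical
  set T : V →ₗ[ℂ] V := ∑ k ∈ K, V.ρ k with hT_def
  have hcomm : ∀ h : G, T * V.ρ h = V.ρ h * T := by
    intro h
    rw [hT_def, Finset.sum_mul, Finset.mul_sum]
    have h1 : ∀ k ∈ K, V.ρ k * V.ρ h = V.ρ (k * h) := fun k _ => (map_mul V.ρ k h).symm
    have h2 : ∀ k ∈ K, V.ρ h * V.ρ k = V.ρ (h * k) := fun k _ => (map_mul V.ρ h k).symm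
    rw [Finset.sum_congr rfl h1, Finset.sum_congr rfl h2]
    apply Finset.sum_nbij' (i := fun k => h⁻¹ * k * h) (j := fun k => h * k * h⁻¹)
    · intro a ha
      have := hK h⁻¹ a ha
      simpa using this
    · intro a ha; exact hK h a ha
    · intro a _; group
    · intro a _; group
    · intro a _
      congr 1
      group
  let fT : V ⟶ V := ⟨FGModuleCat.ofHom T, fun h => by
    ext x
    exact LinearMap.congr_fun (hcomm h) x⟩
  have hrank : finrank ℂ (V ⟶ V) = 1 := by
    rw [FDRep.finrank_hom_simple_simple V V, if_pos ⟨Iso.refl V⟩]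
  obtain ⟨c, hc⟩ := (finrank_eq_one_iff_of_nonzero' (𝟙 V) (id_nonzero V)).mp hrank fT
  have hTc : T = c • LinearMap.id := by
    have h1 := congrArg (fun φ => φ.hom.hom.hom) hc
    exact h1.symm
  have htrT : LinearMap.trace ℂ V T = ∑ k ∈ K, V.character k := by
    rw [hT_def, map_sum]
    rfl
  have htrT' : LinearMap.trace ℂ V T = c * V.character 1 := by
    rw [hTc, map_smul, smul_eq_mul, LinearMap.trace_id, FDRep.char_one]
  have hkg : ∑ k ∈ K, V.character (k * g) = c * V.character g := by
    have e1 : ∀ k ∈ K, V.character (k * g)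
        = LinearMap.trace ℂ V ((V.ρ k).comp (V.ρ g)) := by
      intro k _
      show LinearMap.trace ℂ _ (V.ρ (k * g)) = _
      rw [map_mul V.ρ k g]
      rfl
    rw [Finset.sum_congr rfl e1]
    have e2 : ∑ k ∈ K, LinearMap.trace ℂ V ((V.ρ k).comp (V.ρ g))
        = LinearMap.trace ℂ V (T.comp (V.ρ g)) := by
      rw [hT_def, ← map_sum]
      congr 1
      ext x
      simp
    rw [e2, hTc]
    have e3 : (c • LinearMap.id (R := ℂ) (M := V)).comp (V.ρ g) = c • (V.ρ g) := by
      ext x; simp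
    rw [e3, map_smul, smul_eq_mul]
    rfl
  rw [hkg, ← htrT, htrT']
  ring

lemma schur_irr (χ : IrrChar G) (K : Finset G)
    (hK : ∀ g x, x ∈ K → g * x * g⁻¹ ∈ K) (g : G) :
    (∑ k ∈ K, χ.1 (k * g)) * χ.1 1 = (∑ k ∈ K, χ.1 k) * χ.1 g := by
  obtain ⟨V, hV, hc⟩ := χ.2
  haveI := hV
  rw [hc]
  exact schur_char G V K hK g

def IsSubrep (V : FDRep ℂ G) (U : Submodule ℂ V) : Prop :=
  ∀ (g : G), ∀ x ∈ U, V.ρ g x ∈ U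

def subRepρ (V : FDRep ℂ G) (U : Submodule ℂ V) (hU : IsSubrep G V U) :
    Representation ℂ G U where
  toFun g := (V.ρ g).restrict (fun x hx => hU g x hx)
  map_one' := by
    ext x
    simp [LinearMap.restrict_apply]
  map_mul' g h := by
    ext x
    simp [LinearMap.restrict_apply]

def subRep (V : FDRep ℂ G) (U : Submodule ℂ V) (hU : IsSubrep G V U) : FDRep ℂ G :=
  FDRep.of (subRepρ G V U hU)

lemma subRep_finrank (V : FDRep ℂ G) (U : Submodule ℂ V) (hU : IsSubrep G V U) :
    finrank ℂ (subRep G V U hU) = finrank ℂ U := rfl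

variable {G}

lemma exists_invariant_compl (V : FDRep ℂ G) (U : Submodule ℂ V) (hU : IsSubrep G V U) :
    ∃ W : Submodule ℂ V, IsSubrep G V W ∧ IsCompl U W := by
  classical
  obtain ⟨W0, hW0⟩ := Submodule.exists_isCompl U
  set π0 : V →ₗ[ℂ] V := U.subtype ∘ₗ (U.projectionOnto W0 hW0) with hπ0
  have hπ0U : ∀ x ∈ U, π0 x = x := by
    intro x hx
    simp [hπ0, Submodule.projectionOnto_apply_left hW0 ⟨x, hx⟩]
  have hπ0mem : ∀ x, π0 x ∈ U := fun x => (U.projectionOnto W0 hW0 x).2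
  set π : V →ₗ[ℂ] V :=
    (Fintype.card G : ℂ)⁻¹ • ∑ g : G, (V.ρ g) ∘ₗ π0 ∘ₗ (V.ρ g⁻¹) with hπ
  have hcard : (Fintype.card G : ℂ) ≠ 0 := Nat.cast_ne_zero.mpr Fintype.card_ne_zero
  have hπmem : ∀ x, π x ∈ U := by
    intro x
    rw [hπ]
    simp only [LinearMap.smul_apply, LinearMap.sum_apply, LinearMap.comp_apply]
    exact Submodule.smul_mem _ _ (Submodule.sum_mem _ (fun g _ =>
      hU g _ (hπ0mem _)))
  have hπU : ∀ x ∈ U, π x = x := by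
    intro x hx
    rw [hπ]
    simp only [LinearMap.smul_apply, LinearMap.sum_apply, LinearMap.comp_apply]
    have : ∀ g : G, V.ρ g (π0 (V.ρ g⁻¹ x)) = x := by
      intro g
      rw [hπ0U _ (hU g⁻¹ x hx), ← Module.End.mul_apply, ← map_mul, mul_inv_cancel, map_one,
        Module.End.one_apply]
    rw [Finset.sum_congr rfl (fun g _ => this g), Finset.sum_const, Finset.card_univ,
      ← Nat.cast_smul_eq_nsmul ℂ, smul_smul, inv_mul_cancel₀ hcard, one_smul]
  have hequiv : ∀ h : G, π ∘ₗ V.ρ h = V.ρ h ∘ₗ π := by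
    intro h
    have e1 : ∀ (a b : G) (y : V), V.ρ (a*b) y = V.ρ a (V.ρ b y) := by
      intro a b y
      rw [map_mul]
      rfl
    rw [hπ]
    ext x
    simp only [LinearMap.smul_apply, LinearMap.sum_apply, LinearMap.comp_apply,
      map_smul, map_sum]
    congr 1
    apply Fintype.sum_equiv (Equiv.mulLeft h⁻¹)
    intro g
    simp only [Equiv.coe_mulLeft]
    rw [mul_inv_rev, inv_inv, e1 g⁻¹ h, ← e1 h, mul_inv_cancel_left]
  refine ⟨LinearMap.ker π, ?_, ?_⟩
  · intro g x hx
    have := LinearMap.congr_fun (hequiv g) x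
    simp only [LinearMap.comp_apply] at this
    rw [LinearMap.mem_ker] at hx ⊢
    rw [this, hx, map_zero]
  · constructor
    · rw [Submodule.disjoint_def]
      intro x hxU hxK
      rw [LinearMap.mem_ker] at hxK
      rw [← hπU x hxU, hxK]
    · rw [codisjoint_iff_le_sup]
      intro x _
      refine Submodule.mem_sup.mpr ⟨π x, hπmem x, x - π x, ?_, by abel⟩
      rw [LinearMap.mem_ker, map_sub, sub_eq_zero]
      exact (hπU _ (hπmem x)).symm

lemma char_isCompl_add (V : FDRep ℂ G) (U W : Submodule ℂ V)
    (hU : IsSubrep G V U) (hW : IsSubrep G V W) (h : IsCompl U W) (g : G) :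
    V.character g = (subRep G V U hU).character g + (subRep G V W hW).character g := by
  set e := Submodule.prodEquivOfIsCompl U W h with he
  have key : ∀ p : U × W, V.ρ g (e p) =
      e (LinearMap.prodMap ((subRepρ G V U hU) g) ((subRepρ G V W hW) g) p) := by
    rintro ⟨u, w⟩
    have h1 : e (u, w) = (u : V) + (w : V) := by
      rfl
    have h2 : e ((subRepρ G V U hU g u), (subRepρ G V W hW g w))
        = (V.ρ g u : V) + (V.ρ g w : V) := by
      simp [he, Submodule.prodEquivOfIsCompl]
      rfl
    rw [h1, map_add]
    exact h2.symm
  have he2 : V.ρ g = e.conj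
      (LinearMap.prodMap ((subRepρ G V U hU) g) ((subRepρ G V W hW) g)) := by
    apply LinearMap.ext
    intro x
    rw [LinearEquiv.conj_apply]
    simp only [LinearMap.comp_apply, LinearEquiv.coe_coe]
    rw [← key (e.symm x), LinearEquiv.apply_symm_apply]
  show LinearMap.trace ℂ _ (V.ρ g) = _
  rw [he2, LinearMap.trace_conj', LinearMap.trace_prodMap']
  rfl

lemma subsingleton_char_zero (V : FDRep ℂ G) (h : finrank ℂ V = 0) (g : G) :
    V.character g = 0 := by
  haveI : Subsingleton V := finrank_zero_iff.mp h
  have : V.ρ g = 0 := by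
    ext x
    exact Subsingleton.elim _ _
  show LinearMap.trace ℂ _ (V.ρ g) = 0
  rw [this, map_zero]

lemma simple_of_no_proper (V : FDRep ℂ G) (h0 : finrank ℂ V ≠ 0)
    (h : ∀ U : Submodule ℂ V, IsSubrep G V U → U = ⊥ ∨ U = ⊤) :
    CategoryTheory.Simple V := by
  constructor
  intro Y f hm
  constructor
  · intro hiso hf0
    have h1 : 𝟙 V = CategoryTheory.inv f ≫ f := (IsIso.inv_hom_id f).symm
    have h2 : CategoryStruct.comp (CategoryTheory.inv f) f
        = CategoryStruct.comp (CategoryTheory.inv f) (0 : Y ⟶ V) :=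
      congrArg _ hf0
    rw [Limits.comp_zero] at h2
    have hid : 𝟙 V = (0 : V ⟶ V) := h1.trans h2
    have hid2 := congrArg (fun φ => φ.hom.hom.hom) hid
    have hz : ∀ x : V, x = 0 := by
      intro x
      have := LinearMap.congr_fun (hid2 : LinearMap.id = (0 : V →ₗ[ℂ] V)) x
      simpa using this
    apply h0
    rw [finrank_zero_iff]
    exact ⟨fun a b => (hz a).trans (hz b).symm⟩
  · intro hf0
    set φ : Y →ₗ[ℂ] V := f.hom.hom.hom with hφ
    have hcomm : ∀ (g : G) (y : Y), φ (Y.ρ g y) = V.ρ g (φ y) := by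
      intro g y
      exact LinearMap.congr_fun
        (congrArg (fun φ => φ.hom.hom) (f.comm g)) y
    have hinj : Function.Injective φ := by
      rw [← LinearMap.ker_eq_bot]
      have hker : IsSubrep G Y (LinearMap.ker φ) := by
        intro g x hx
        rw [LinearMap.mem_ker] at hx ⊢
        rw [hcomm, hx, map_zero]
      let ι : subRep G Y (LinearMap.ker φ) hker ⟶ Y :=
        ⟨FGModuleCat.ofHom (LinearMap.ker φ).subtype, fun g => rfl⟩
      have hhom : φ.comp ((LinearMap.ker φ).subtype) = 0 := by
        apply LinearMap.ext
        rintro ⟨x, hx⟩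
        exact hx
      have h1 : ι ≫ f = (0 : subRep G Y (LinearMap.ker φ) hker ⟶ Y) ≫ f := by
        apply Action.hom_ext
        ext x
        exact LinearMap.congr_fun (hhom.trans (LinearMap.comp_zero φ).symm) x
      have h2 : ι = 0 := Mono.right_cancellation _ _ h1
      rw [eq_bot_iff]
      intro x hx
      have h3 : ((⟨x, hx⟩ : LinearMap.ker φ) : Y) = 0 := by
        have := congrArg (fun φ => φ.hom.hom.hom) h2
        exact LinearMap.congr_fun this ⟨x, hx⟩
      simpa using h3
    have hrange : IsSubrep G V (LinearMap.range φ) := by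
      rintro g x ⟨y, rfl⟩
      exact ⟨Y.ρ g y, hcomm g y⟩
    have hsurj : Function.Surjective φ := by
      rw [← LinearMap.range_eq_top]
      rcases h _ hrange with hbot | htop
      · exfalso
        apply hf0
        apply Action.hom_ext
        ext y
        show φ y = (0 : Y →ₗ[ℂ] V) y
        have hmem : φ y ∈ LinearMap.range φ := ⟨y, rfl⟩
        rw [hbot] at hmem
        simpa using hmem
      · exact htop
    let e := LinearEquiv.ofBijective φ ⟨hinj, hsurj⟩
    have hee : ∀ y : Y, e y = φ y := fun y => rfl
    have l1 : ∀ z : V, φ (e.symm z) = z := fun z => (hee _).symm.trans (e.apply_symm_apply z)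
    let ginv : V ⟶ Y := ⟨FGModuleCat.ofHom (e.symm.toLinearMap : V →ₗ[ℂ] Y), fun g => by
      ext x
      apply hinj
      show φ (e.symm (V.ρ g x)) = φ (Y.ρ g (e.symm x))
      rw [l1, hcomm, l1]⟩
    refine ⟨⟨ginv, ?_, ?_⟩⟩
    · apply Action.hom_ext
      ext y
      show e.symm (φ y) = y
      rw [← hee, e.symm_apply_apply]
    · apply Action.hom_ext
      ext x
      show φ (e.symm x) = x
      exact l1 x

lemma char_decomp (V : FDRep ℂ G) :
    ∃ s : Multiset (IrrChar G), ∀ g : G, V.character g = (s.map (fun χ => χ.1 g)).sum := by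
  suffices H : ∀ (n : ℕ) (V : FDRep ℂ G), finrank ℂ V = n →
      ∃ s : Multiset (IrrChar G), ∀ g : G, V.character g = (s.map (fun χ => χ.1 g)).sum from
    H (finrank ℂ V) V rfl
  intro n
  induction n using Nat.strong_induction_on with
  | _ n IH =>
    intro V hV
    by_cases h0 : finrank ℂ V = 0
    · exact ⟨0, fun g => by rw [subsingleton_char_zero V h0 g]; simp⟩
    by_cases hsimp : ∀ U : Submodule ℂ V, IsSubrep G V U → U = ⊥ ∨ U = ⊤
    · have hS := simple_of_no_proper V h0 hsimp
      refine ⟨{⟨V.character, ⟨V, hS, rfl⟩⟩}, fun g => by simp⟩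
    · push_neg at hsimp
      obtain ⟨U, hU, hUbot, hUtop⟩ := hsimp
      obtain ⟨W, hW, hcompl⟩ := exists_invariant_compl V U hU
      have hsum : finrank ℂ U + finrank ℂ W = finrank ℂ V :=
        Submodule.finrank_add_eq_of_isCompl hcompl
      have hU0 : finrank ℂ U ≠ 0 := fun hh => hUbot (Submodule.finrank_eq_zero.mp hh)
      have hWbot : W ≠ ⊥ := by
        intro hh
        apply hUtop
        have hcd := hcompl.codisjoint
        rw [codisjoint_iff] at hcd
        rw [hh, sup_bot_eq] at hcd
        exact hcd
      have hW0 : finrank ℂ W ≠ 0 := fun hh => hWbot (Submodule.finrank_eq_zero.mp hh)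
      obtain ⟨s1, hs1⟩ := IH (finrank ℂ U) (by omega) (subRep G V U hU) (subRep_finrank G V U hU)
      obtain ⟨s2, hs2⟩ := IH (finrank ℂ W) (by omega) (subRep G V W hW) (subRep_finrank G V W hW)
      refine ⟨s1 + s2, fun g => ?_⟩
      rw [char_isCompl_add V U W hU hW hcompl g, hs1 g, hs2 g, Multiset.map_add,
        Multiset.sum_add]

variable (G)

def regRep : FDRep ℂ G := FDRep.of (Representation.ofMulAction ℂ G G)

lemma regRep_char (g : G) :
    (regRep G).character g = if g = 1 then (Fintype.card G : ℂ) else 0 := by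
  classical
  show LinearMap.trace ℂ (MonoidAlgebra ℂ G) (Representation.ofMulAction ℂ G G g) = _
  have hconj : Representation.ofMulAction ℂ G G g = (MonoidAlgebra.coeffLinearEquiv ℂ).symm.conj
      (Finsupp.lmapDomain ℂ ℂ (g • ·)) := rfl
  rw [hconj, LinearMap.trace_conj']
  rw [LinearMap.trace_eq_matrix_trace ℂ (Finsupp.basisSingleOne)]
  rw [Matrix.trace]
  have hdiag : ∀ i : G,
      Matrix.diag ((LinearMap.toMatrix Finsupp.basisSingleOne Finsupp.basisSingleOne)
        (Finsupp.lmapDomain ℂ ℂ (g • ·))) i = if g = 1 then 1 else 0 := by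
    intro i
    rw [Matrix.diag]
    rw [LinearMap.toMatrix_apply]
    have hb : (Finsupp.basisSingleOne (R := ℂ) (ι := G)) i = Finsupp.single i 1 := rfl
    rw [hb, Finsupp.lmapDomain_apply, Finsupp.mapDomain_single, Finsupp.basisSingleOne_repr]
    simp only [LinearEquiv.refl_apply]
    rw [Finsupp.single_apply]
    have hiff : (g • i = i) ↔ (g = 1) := by
      rw [smul_eq_mul, mul_eq_right]
    split_ifs with h1 h2 h2
    · rfl
    · exact absurd (hiff.mp h1) h2
    · exact absurd (hiff.mpr h2) h1
    · rfl
  rw [Finset.sum_congr rfl (fun i _ => hdiag i)]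
  split_ifs with h
  · rw [Finset.sum_const, Finset.card_univ, nsmul_eq_mul, mul_one]
  · rw [Finset.sum_const, smul_zero]

lemma exists_reg_multiset :
    ∃ s : Multiset (IrrChar G), ∀ g : G,
      (if g = 1 then (Fintype.card G : ℂ) else 0) = (s.map (fun χ => χ.1 g)).sum := by
  obtain ⟨s, hs⟩ := char_decomp (G := G) (regRep G)
  exact ⟨s, fun g => by rw [← hs g, regRep_char]⟩

lemma count_formula (s : Multiset (IrrChar G))
    (hs : ∀ g : G, (if g = 1 then (Fintype.card G : ℂ) else 0) = (s.map (fun χ => χ.1 g)).sum)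
    (χ : IrrChar G) : (s.count χ : ℂ) = χ.1 1 := by
  have hcard : (Fintype.card G : ℂ) ≠ 0 := Nat.cast_ne_zero.mpr Fintype.card_ne_zero
  have key : ∑ g : G, (if g = 1 then (Fintype.card G:ℂ) else 0) * χ.1 g⁻¹
      = (Fintype.card G : ℂ) * χ.1 1 := by
    have e0 : ∀ g : G, (if g = 1 then (Fintype.card G:ℂ) else 0) * χ.1 g⁻¹
        = if g = 1 then (Fintype.card G:ℂ) * χ.1 g⁻¹ else 0 := by
      intro g
      split_ifs <;> simp
    rw [Finset.sum_congr rfl (fun g _ => e0 g),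
      Finset.sum_ite_eq' Finset.univ 1 (fun g => (Fintype.card G:ℂ) * χ.1 g⁻¹),
      if_pos (Finset.mem_univ 1), inv_one]
  have key2 : ∑ g : G, ((s.map (fun ψ => ψ.1 g)).sum) * χ.1 g⁻¹
      = (s.count χ : ℂ) * (Fintype.card G : ℂ) := by
    have e1 : ∀ g : G, (s.map (fun ψ => ψ.1 g)).sum
        = ∑ ψ ∈ s.toFinset, (s.count ψ : ℂ) * ψ.1 g := by
      intro g
      rw [Finset.sum_multiset_map_count]
      exact Finset.sum_congr rfl (fun ψ _ => by rw [← Nat.cast_smul_eq_nsmul ℂ, smul_eq_mul])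
    calc ∑ g : G, ((s.map (fun ψ => ψ.1 g)).sum) * χ.1 g⁻¹
        = ∑ g : G, ∑ ψ ∈ s.toFinset, (s.count ψ : ℂ) * (ψ.1 g * χ.1 g⁻¹) := by
          apply Finset.sum_congr rfl
          intro g _
          rw [e1 g, Finset.sum_mul]
          exact Finset.sum_congr rfl (fun ψ _ => by ring)
      _ = ∑ ψ ∈ s.toFinset, ∑ g : G, (s.count ψ : ℂ) * (ψ.1 g * χ.1 g⁻¹) := Finset.sum_comm
      _ = ∑ ψ ∈ s.toFinset, (if ψ = χ then (s.count ψ : ℂ) * (Fintype.card G:ℂ) else 0) := by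
          apply Finset.sum_congr rfl
          intro ψ _
          rw [← Finset.mul_sum, ortho G ψ χ]
          split_ifs <;> simp
      _ = (s.count χ : ℂ) * (Fintype.card G:ℂ) := by
          rw [Finset.sum_ite_eq' s.toFinset χ (fun ψ => (s.count ψ : ℂ) * (Fintype.card G:ℂ))]
          by_cases hχ : χ ∈ s.toFinset
          · rw [if_pos hχ]
          · rw [if_neg hχ, Multiset.count_eq_zero.mpr (fun hc => hχ (Multiset.mem_toFinset.mpr hc))]
            simp
  have h3 : (s.count χ : ℂ) * (Fintype.card G : ℂ) = (Fintype.card G : ℂ) * χ.1 1 := by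
    rw [← key2, ← key]
    exact Finset.sum_congr rfl (fun g _ => by rw [hs g])
  have h4 := h3
  rw [mul_comm ((s.count χ : ℂ)) _] at h4
  exact mul_left_cancel₀ hcard h4

instance irrChar_finite : Finite (IrrChar G) := by
  obtain ⟨s, hs⟩ := exists_reg_multiset G
  have hmem : ∀ χ : IrrChar G, χ ∈ s.toFinset := by
    intro χ
    rw [Multiset.mem_toFinset, ← Multiset.count_pos]
    by_contra hc
    have h0 := count_formula G s hs χ
    have hz : s.count χ = 0 := by omega
    rw [hz] at h0
    exact char_one_ne_zero G χ (by exact_mod_cast h0.symm)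
  exact Finite.of_injective (fun χ : IrrChar G => (⟨χ, hmem χ⟩ : {x // x ∈ s.toFinset}))
    (fun a b hab => by simpa using hab)

noncomputable instance : Fintype (IrrChar G) := Fintype.ofFinite _

lemma completeness (g : G) :
    ∑ χ : IrrChar G, χ.1 1 * χ.1 g = if g = 1 then (Fintype.card G : ℂ) else 0 := by
  obtain ⟨s, hs⟩ := exists_reg_multiset G
  have hmem : ∀ χ : IrrChar G, χ ∈ s.toFinset := by
    intro χ
    rw [Multiset.mem_toFinset, ← Multiset.count_pos]
    by_contra hc
    have h0 := count_formula G s hs χ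
    have hz : s.count χ = 0 := by omega
    rw [hz] at h0
    exact char_one_ne_zero G χ (by exact_mod_cast h0.symm)
  rw [hs g, Finset.sum_multiset_map_count, Finset.eq_univ_of_forall hmem]
  apply Finset.sum_congr rfl
  intro χ _
  rw [← Nat.cast_smul_eq_nsmul ℂ, smul_eq_mul, count_formula G s hs χ]

/-! ### finsum / finset conversions -/

lemma charSum_coe (χ : G → ℂ) (s : Finset G) : charSum G χ ↑s = ∑ g ∈ s, χ g := by
  rw [charSum, finsum_mem_coe_finset]

lemma sigmaChar_coe (s : Finset (IrrChar G)) (g : G) :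
    sigmaChar G ↑s g = ∑ χ ∈ s, χ.1 1 * χ.1 g := by
  show ∑ᶠ χ ∈ (↑s : Set (IrrChar G)), χ.1 1 * χ.1 g = _
  rw [finsum_mem_coe_finset]

omit [Group G] [Fintype G] in
lemma fiber_group_sum {α β : Type} [Fintype α] [DecidableEq β] (f : α → β) (w : β → ℂ) (t : α → ℂ) :
    ∑ a : α, w (f a) * t a =
      ∑ v ∈ Finset.univ.image f, w v * ∑ a ∈ Finset.univ.filter (fun a => f a = v), t a := by
  rw [← Finset.sum_fiberwise_of_maps_to
    (fun a _ => Finset.mem_image_of_mem f (Finset.mem_univ a)) (fun a => w (f a) * t a)]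
  apply Finset.sum_congr rfl
  intro v _
  rw [Finset.mul_sum]
  apply Finset.sum_congr rfl
  intro a ha
  rw [(Finset.mem_filter.mp ha).2]

/-! ### master identities -/

lemma M2 (χ : IrrChar G) (X : Set (IrrChar G)) :
    ∑ g : G, (starRingEnd ℂ) (sigmaChar G X g) * χ.1 g
      = if χ ∈ X then (Fintype.card G : ℂ) * χ.1 1 else 0 := by
  have hXfin : X.Finite := X.toFinite
  have hsig : ∀ g : G, (starRingEnd ℂ) (sigmaChar G X g)
      = ∑ φ ∈ hXfin.toFinset, φ.1 1 * φ.1 g⁻¹ := by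
    intro g
    conv_lhs => rw [← Set.Finite.coe_toFinset hXfin]
    rw [sigmaChar_coe, map_sum]
    apply Finset.sum_congr rfl
    intro φ _
    rw [map_mul, char_one_real, ← char_inv_irr]
  calc ∑ g : G, (starRingEnd ℂ) (sigmaChar G X g) * χ.1 g
      = ∑ g : G, ∑ φ ∈ hXfin.toFinset, φ.1 1 * (χ.1 g * φ.1 g⁻¹) := by
        apply Finset.sum_congr rfl
        intro g _
        rw [hsig g, Finset.sum_mul]
        exact Finset.sum_congr rfl (fun φ _ => by ring)
    _ = ∑ φ ∈ hXfin.toFinset, ∑ g : G, φ.1 1 * (χ.1 g * φ.1 g⁻¹) := Finset.sum_comm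
    _ = ∑ φ ∈ hXfin.toFinset, (if φ = χ then (Fintype.card G : ℂ) * χ.1 1 else 0) := by
        apply Finset.sum_congr rfl
        intro φ _
        rw [← Finset.mul_sum, ortho G χ φ]
        by_cases h : χ = φ
        · rw [if_pos h, if_pos h.symm, h]; ring
        · rw [if_neg h, if_neg (fun hh => h hh.symm), mul_zero]
    _ = if χ ∈ X then (Fintype.card G : ℂ) * χ.1 1 else 0 := by
        rw [Finset.sum_ite_eq' hXfin.toFinset χ (fun _ => (Fintype.card G : ℂ) * χ.1 1)]
        congr 1
        simp only [eq_iff_iff]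
        exact Set.Finite.mem_toFinset hXfin

lemma M1 (K : Set G) (hK : GInv G K) (g : G) :
    ∑ χ : IrrChar G, (starRingEnd ℂ) (charSum G χ.1 K) * χ.1 g
      = if g ∈ K then (Fintype.card G : ℂ) else 0 := by
  set K' : Set G := (fun x => x⁻¹) ⁻¹' K with hK'def
  set Kf := K'.toFinite.toFinset with hKf
  have hK'inv : ∀ a x, x ∈ Kf → a * x * a⁻¹ ∈ Kf := by
    intro a x hx
    rw [hKf, Set.Finite.mem_toFinset] at hx ⊢
    show (a * x * a⁻¹)⁻¹ ∈ K
    have he : (a * x * a⁻¹)⁻¹ = a * x⁻¹ * a⁻¹ := by group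
    rw [he]
    exact hK a x⁻¹ hx
  have hconj : ∀ χ : IrrChar G, (starRingEnd ℂ) (charSum G χ.1 K)
      = ∑ k ∈ Kf, χ.1 k := by
    intro χ
    have h1 : charSum G χ.1 K = ∑ k ∈ K.toFinite.toFinset, χ.1 k := by
      conv_lhs => rw [← Set.Finite.coe_toFinset K.toFinite]
      exact charSum_coe G χ.1 _
    rw [h1, map_sum]
    apply Finset.sum_nbij' (i := fun k => k⁻¹) (j := fun k => k⁻¹)
    · intro a ha
      rw [Set.Finite.mem_toFinset] at ha
      rw [hKf, Set.Finite.mem_toFinset]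
      show a⁻¹⁻¹ ∈ K
      rwa [inv_inv]
    · intro a ha
      rw [hKf, Set.Finite.mem_toFinset] at ha
      rw [Set.Finite.mem_toFinset]
      exact ha
    · intro a _; simp
    · intro a _; simp
    · intro a _
      exact (char_inv_irr G χ a).symm
  rw [Finset.sum_congr rfl (fun χ _ => by rw [hconj χ])]
  have hcard : (Fintype.card G : ℂ) ≠ 0 := Nat.cast_ne_zero.mpr Fintype.card_ne_zero
  calc ∑ χ : IrrChar G, (∑ k ∈ Kf, χ.1 k) * χ.1 g
      = ∑ χ : IrrChar G, (∑ k ∈ Kf, χ.1 (k * g)) * χ.1 1 := by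
        exact Finset.sum_congr rfl (fun χ _ => (schur_irr G χ Kf hK'inv g).symm)
    _ = ∑ χ : IrrChar G, ∑ k ∈ Kf, χ.1 1 * χ.1 (k * g) := by
        apply Finset.sum_congr rfl
        intro χ _
        rw [Finset.sum_mul]
        exact Finset.sum_congr rfl (fun k _ => by ring)
    _ = ∑ k ∈ Kf, ∑ χ : IrrChar G, χ.1 1 * χ.1 (k * g) := Finset.sum_comm
    _ = ∑ k ∈ Kf, (if k = g⁻¹ then (Fintype.card G : ℂ) else 0) := by
        apply Finset.sum_congr rfl
        intro k _
        rw [completeness G (k * g)]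
        congr 1
        simp only [eq_iff_iff]
        constructor
        · intro hh; exact eq_inv_of_mul_eq_one_left hh
        · rintro rfl; rw [inv_mul_cancel]
    _ = if g ∈ K then (Fintype.card G : ℂ) else 0 := by
        rw [Finset.sum_ite_eq' Kf g⁻¹ (fun _ => (Fintype.card G : ℂ))]
        congr 1
        simp only [eq_iff_iff, hKf, Set.Finite.mem_toFinset]
        show g⁻¹ ∈ K' ↔ g ∈ K
        rw [hK'def]
        simp [Set.mem_preimage]

end AuxChar

/-- `Clpt (Irpt 𝒦) ≼ 𝒦` and `Irpt (Clpt 𝒳) ≼ 𝒳`. -/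
theorem stmt10 (G : Type) [Group G] [Fintype G] :
    (∀ 𝒦 : Set (Set G), Setoid.IsPartition 𝒦 → (∀ K ∈ 𝒦, GInv G K) →
        Refines (Clpt G (Irpt G 𝒦)) 𝒦) ∧
    (∀ 𝒳 : Set (Set (IrrChar G)), Setoid.IsPartition 𝒳 →
        Refines (Irpt G (Clpt G 𝒳)) 𝒳) := by
  classical
  have hcard : (Fintype.card G : ℂ) ≠ 0 := Nat.cast_ne_zero.mpr Fintype.card_ne_zero
  constructor
  · -- Part 1
    intro 𝒦 hpart hGInv A hA
    obtain ⟨g₀, rfl⟩ := hA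
    obtain ⟨K₀, hK₀, -⟩ := hpart.2 g₀
    refine ⟨K₀, hK₀.1, ?_⟩
    intro h hh
    simp only [Set.mem_setOf_eq] at hh
    set f' : IrrChar G → (↥𝒦 → ℂ) := fun χ K' => charSum G χ.1 K'.1 / χ.1 1 with hf'
    have hfib : ∀ v ∈ Finset.univ.image f',
        (↑(Finset.univ.filter (fun χ => f' χ = v)) : Set (IrrChar G)) ∈ Irpt G 𝒦 := by
      intro v hv
      obtain ⟨χv, -, hχv⟩ := Finset.mem_image.mp hv
      refine ⟨χv, ?_⟩
      ext ψ
      simp only [Finset.coe_filter, Set.mem_setOf_eq, Finset.mem_univ, true_and]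
      constructor
      · intro hψ K hKm
        exact congrFun (hψ.trans hχv.symm) ⟨K, hKm⟩
      · intro hψ
        rw [← hχv]
        funext K'
        exact hψ K'.1 K'.2
    have key : ∀ K ∈ 𝒦, (if h ∈ K then (1:ℂ) else 0) = (if g₀ ∈ K then 1 else 0) := by
      intro K hKm
      have hGK := hGInv K hKm
      have expand : ∀ x : G, (if x ∈ K then (Fintype.card G:ℂ) else 0)
          = ∑ v ∈ Finset.univ.image f', (starRingEnd ℂ) (v ⟨K, hKm⟩) *
              ∑ χ ∈ Finset.univ.filter (fun χ => f' χ = v), χ.1 1 * χ.1 x := by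
        intro x
        have e1 : ∀ χ : IrrChar G, (starRingEnd ℂ) (charSum G χ.1 K) * χ.1 x
            = (starRingEnd ℂ) (f' χ ⟨K, hKm⟩) * (χ.1 1 * χ.1 x) := by
          intro χ
          have hne := char_one_ne_zero G χ
          rw [hf']
          simp only
          rw [map_div₀, char_one_real]
          field_simp
        calc (if x ∈ K then (Fintype.card G:ℂ) else 0)
            = ∑ χ : IrrChar G, (starRingEnd ℂ) (charSum G χ.1 K) * χ.1 x := (M1 G K hGK x).symm
          _ = ∑ χ : IrrChar G, (starRingEnd ℂ) (f' χ ⟨K, hKm⟩) * (χ.1 1 * χ.1 x) :=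
              Finset.sum_congr rfl (fun χ _ => e1 χ)
          _ = ∑ v ∈ Finset.univ.image f', (starRingEnd ℂ) (v ⟨K, hKm⟩) *
              ∑ χ ∈ Finset.univ.filter (fun χ => f' χ = v), χ.1 1 * χ.1 x :=
              fiber_group_sum f' (fun v => (starRingEnd ℂ) (v ⟨K, hKm⟩))
                (fun χ => χ.1 1 * χ.1 x)
      have h1 := expand h
      have h2 := expand g₀
      have h3 : (if h ∈ K then (Fintype.card G:ℂ) else 0)
          = (if g₀ ∈ K then (Fintype.card G:ℂ) else 0) := by
        rw [h1, h2]
        apply Finset.sum_congr rfl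
        intro v hv
        congr 1
        have hσ := hh _ (hfib v hv)
        rw [sigmaChar_coe, sigmaChar_coe] at hσ
        exact hσ
      by_cases p : h ∈ K <;> by_cases q : g₀ ∈ K <;>
        simp only [p, q, if_true, if_false] at h3 ⊢ <;> first
        | rfl
        | exact absurd h3 hcard
        | exact absurd h3.symm hcard
    have hfin := key K₀ hK₀.1
    rw [if_pos hK₀.2] at hfin
    by_contra hcon
    rw [if_neg hcon] at hfin
    exact one_ne_zero hfin.symm
  · -- Part 2
    intro 𝒳 hpart Y hY
    obtain ⟨χ₀, rfl⟩ := hY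
    obtain ⟨X₀, hX₀, -⟩ := hpart.2 χ₀
    refine ⟨X₀, hX₀.1, ?_⟩
    intro ψ hψ
    simp only [Set.mem_setOf_eq] at hψ
    set f : G → (↥𝒳 → ℂ) := fun g X' => sigmaChar G X'.1 g with hf
    have hfib : ∀ v ∈ Finset.univ.image f,
        (↑(Finset.univ.filter (fun g => f g = v)) : Set G) ∈ Clpt G 𝒳 := by
      intro v hv
      obtain ⟨gv, -, hgv⟩ := Finset.mem_image.mp hv
      refine ⟨gv, ?_⟩
      ext x
      simp only [Finset.coe_filter, Set.mem_setOf_eq, Finset.mem_univ, true_and]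
      constructor
      · intro hx X hXm
        exact congrFun (hx.trans hgv.symm) ⟨X, hXm⟩
      · intro hx
        rw [← hgv]
        funext X'
        exact hx X'.1 X'.2
    have key : ∀ X ∈ 𝒳, (if ψ ∈ X then (1:ℂ) else 0) = (if χ₀ ∈ X then 1 else 0) := by
      intro X hXm
      have expand : ∀ χ : IrrChar G, (if χ ∈ X then (Fintype.card G:ℂ) else 0)
          = ∑ v ∈ Finset.univ.image f, (starRingEnd ℂ) (v ⟨X, hXm⟩) *
              (charSum G χ.1 ↑(Finset.univ.filter (fun g => f g = v)) / χ.1 1) := by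
        intro χ
        have hne := char_one_ne_zero G χ
        have hE : ∑ g : G, (starRingEnd ℂ) (f g ⟨X, hXm⟩) * χ.1 g
            = if χ ∈ X then (Fintype.card G:ℂ) * χ.1 1 else 0 := M2 G χ X
        rw [fiber_group_sum f (fun v => (starRingEnd ℂ) (v ⟨X, hXm⟩)) (fun g => χ.1 g)] at hE
        have hrw : ∀ v ∈ Finset.univ.image f,
            (starRingEnd ℂ) (v ⟨X, hXm⟩) *
              (charSum G χ.1 ↑(Finset.univ.filter (fun g => f g = v)) / χ.1 1)
            = ((starRingEnd ℂ) (v ⟨X, hXm⟩) *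
              ∑ g ∈ Finset.univ.filter (fun g => f g = v), χ.1 g) / χ.1 1 := by
          intro v _
          rw [charSum_coe, mul_div_assoc]
        rw [Finset.sum_congr rfl hrw, ← Finset.sum_div, hE]
        split_ifs with hmem
        · rw [mul_div_assoc, div_self hne, mul_one]
        · rw [zero_div]
      have h1 := expand ψ
      have h2 := expand χ₀
      have h3 : (if ψ ∈ X then (Fintype.card G:ℂ) else 0)
          = (if χ₀ ∈ X then (Fintype.card G:ℂ) else 0) := by
        rw [h1, h2]
        apply Finset.sum_congr rfl
        intro v hv
        congr 1
        exact hψ _ (hfib v hv)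
      by_cases p : ψ ∈ X <;> by_cases q : χ₀ ∈ X <;>
        simp only [p, q, if_true, if_false] at h3 ⊢ <;> first
        | rfl
        | exact absurd h3 hcard
        | exact absurd h3.symm hcard
    have hfin := key X₀ hX₀.1
    rw [if_pos hX₀.2] at hfin
    by_contra hcon
    rw [if_neg hcon] at hfin
    exact one_ne_zero hfin.symm

end
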